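/- For real constants a ≥ 0, b > 0, a natural number D ≥ 1, a natural number n ≥ 0, and B > 0, the multi-sum S(B) = ∑_{p₁,...,p_D = 1}^∞ (∑_{l=1}^D p_l^a)^n · e^{-B ∑_{l=1}^D p_l^b} satisfies: there exist constants c₁, c₂ > 0 such that for all sufficiently small B > 0, c₁ · B^{-(an+D)/b} ≤ S(B) ≤ c₂ · B^{-(an+D)/b}. -/

import Mathlib

open Real

lemma exp_neg_le_factorial_div (k : ℕ) {y : ℝ} (hy : 0 < y) :
    Real.exp (-y) ≤ (k.factorial : ℝ) / y ^ k := by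
  have h1 : y ^ k / (k.factorial : ℝ) ≤ Real.exp y :=
    Real.pow_div_factorial_le_exp y hy.le k
  have h2 : 0 < y ^ k / (k.factorial : ℝ) := by positivity
  calc Real.exp (-y) = (Real.exp y)⁻¹ := Real.exp_neg y
    _ ≤ (y ^ k / (k.factorial : ℝ))⁻¹ := inv_anti₀ h2 h1
    _ = (k.factorial : ℝ) / y ^ k := by rw [inv_div]

lemma telescope_tail (M : ℕ) (hM : 1 ≤ M) :
    Summable (fun q : ℕ => 1 / (((q : ℝ) + M) * ((q : ℝ) + M + 1))) ∧
      ∑' q : ℕ, 1 / (((q : ℝ) + M) * ((q : ℝ) + M + 1)) ≤ 1 / M := by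
  have hM' : (1 : ℝ) ≤ (M : ℝ) := by exact_mod_cast hM
  have hpos : ∀ q : ℕ, (0 : ℝ) < (q : ℝ) + M := fun q => by positivity
  have key : ∀ q : ℕ, 1 / (((q : ℝ) + M) * ((q : ℝ) + M + 1))
      = 1 / ((q : ℝ) + M) - 1 / ((q : ℝ) + M + 1) := by
    intro q
    have h1 := hpos q
    have h2 : (0 : ℝ) < (q : ℝ) + M + 1 := by positivity
    field_simp
    ring
  have hnn : ∀ q : ℕ, (0 : ℝ) ≤ 1 / (((q : ℝ) + M) * ((q : ℝ) + M + 1)) := by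
    intro q; positivity
  have hpart : ∀ Q : ℕ,
      ∑ q ∈ Finset.range Q, 1 / (((q : ℝ) + M) * ((q : ℝ) + M + 1)) ≤ 1 / M := by
    intro Q
    have : ∑ q ∈ Finset.range Q, 1 / (((q : ℝ) + M) * ((q : ℝ) + M + 1))
        = ∑ q ∈ Finset.range Q, ((fun i : ℕ => 1 / ((i : ℝ) + M)) q
            - (fun i : ℕ => 1 / ((i : ℝ) + M)) (q + 1)) := by
      refine Finset.sum_congr rfl fun q _ => ?_
      rw [key q]
      push_cast
      ring_nf
    rw [this, Finset.sum_range_sub' (fun i : ℕ => 1 / ((i : ℝ) + M)) Q]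
    have : (0:ℝ) ≤ 1 / ((Q : ℝ) + M) := by positivity
    simp only [Nat.cast_zero, zero_add]
    linarith
  exact ⟨summable_of_sum_range_le hnn hpart, Real.tsum_le_of_sum_range_le hnn hpart⟩

lemma one_dim_bound (c b : ℝ) (hc : 0 ≤ c) (hb : 0 < b) :
    ∃ C : ℝ, 0 < C ∧ ∀ B : ℝ, 0 < B → B < 1 →
      Summable (fun p : ℕ => ((p : ℝ) + 1) ^ c * Real.exp (-B * ((p : ℝ) + 1) ^ b)) ∧
      ∑' p : ℕ, ((p : ℝ) + 1) ^ c * Real.exp (-B * ((p : ℝ) + 1) ^ b)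
        ≤ C * B ^ (-(c + 1) / b) := by
  obtain ⟨k, hk'⟩ := exists_nat_ge ((c + 2) / b)
  have hk : c + 2 ≤ b * k := by
    rw [div_le_iff₀ hb] at hk'
    linarith
  set K : ℝ := (k.factorial : ℝ) with hKdef
  have hK0 : 0 < K := by positivity
  refine ⟨2 ^ (c + 1) + K, by positivity, ?_⟩
  intro B hB hB1
  set x : ℝ := B ^ (-1 / b) with hxdef
  have hx0 : 0 < x := Real.rpow_pos_of_pos hB _
  have hx1 : 1 < x := by
    rw [hxdef, Real.one_lt_rpow_iff_of_pos hB]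
    exact Or.inr ⟨hB1, div_neg_of_neg_of_pos (by norm_num) hb⟩
  have hxpow : ∀ t : ℝ, x ^ t = B ^ (-t / b) := by
    intro t
    rw [hxdef, ← Real.rpow_mul hB.le]
    congr 1
    field_simp
  have hBk : x ^ (b * (k : ℝ)) = (B ^ (k : ℕ))⁻¹ := by
    rw [hxpow (b * k)]
    have h1 : -(b * (k : ℝ)) / b = -(k : ℝ) := by
      rw [neg_div, mul_comm, mul_div_assoc, div_self hb.ne', mul_one]
    rw [h1, Real.rpow_neg hB.le, Real.rpow_natCast]
  set M : ℕ := ⌈x⌉₊ with hMdef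
  have hM1 : 1 ≤ M := Nat.one_le_iff_ne_zero.mpr (by
    simp only [hMdef, ne_eq, Nat.ceil_eq_zero, not_le]
    exact hx0)
  have hxM : x ≤ (M : ℝ) := Nat.le_ceil x
  have hM2x : (M : ℝ) ≤ 2 * x := by
    have := Nat.ceil_lt_add_one hx0.le
    have hx1' : (1:ℝ) ≤ x := hx1.le
    simp only [hMdef]
    linarith
  set g : ℕ → ℝ := fun p => ((p : ℝ) + 1) ^ c * Real.exp (-B * ((p : ℝ) + 1) ^ b)
    with hgdef
  have hgnn : ∀ p, 0 ≤ g p := fun p => by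
    simp only [hgdef]
    positivity
  -- head bound
  have hhead : ∑ p ∈ Finset.range M, g p ≤ 2 ^ (c + 1) * x ^ (c + 1) := by
    have hterm : ∀ p ∈ Finset.range M, g p ≤ (2 * x) ^ c := by
      intro p hp
      have hpM : (p : ℕ) < M := Finset.mem_range.mp hp
      have hp' : (p : ℝ) + 1 ≤ 2 * x := by
        have : (p : ℝ) + 1 ≤ (M : ℝ) := by exact_mod_cast hpM
        linarith
      have h1 : ((p : ℝ) + 1) ^ c ≤ (2 * x) ^ c :=
        Real.rpow_le_rpow (by positivity) hp' hc
      have h2 : Real.exp (-B * ((p : ℝ) + 1) ^ b) ≤ 1 := by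
        rw [Real.exp_le_one_iff]
        have h3 : 0 < ((p : ℝ) + 1) ^ b := by positivity
        nlinarith
      calc g p ≤ ((p : ℝ) + 1) ^ c * 1 := by
            simp only [hgdef]
            exact mul_le_mul_of_nonneg_left h2 (by positivity)
        _ = ((p : ℝ) + 1) ^ c := mul_one _
        _ ≤ (2 * x) ^ c := h1
    calc ∑ p ∈ Finset.range M, g p ≤ ∑ _p ∈ Finset.range M, (2 * x) ^ c :=
          Finset.sum_le_sum hterm
      _ = (M : ℝ) * (2 * x) ^ c := by
          rw [Finset.sum_const, Finset.card_range, nsmul_eq_mul]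
      _ ≤ (2 * x) * (2 * x) ^ c := by
          exact mul_le_mul_of_nonneg_right hM2x (by positivity)
      _ = (2 * x) ^ (c + 1) := by
          rw [Real.rpow_add (by positivity), Real.rpow_one]
          ring
      _ = 2 ^ (c + 1) * x ^ (c + 1) := Real.mul_rpow (by norm_num) hx0.le
  -- tail pointwise bound
  have hterm : ∀ p : ℕ, M ≤ p →
      g p ≤ K * x ^ (c + 2 - b * k) * x ^ (b * (k : ℝ)) * (1 / ((p : ℝ) * ((p : ℝ) + 1))) := by
    intro p hp
    have hp1 : (1 : ℝ) ≤ (p : ℝ) := by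
      have : (1 : ℕ) ≤ p := le_trans hM1 hp
      exact_mod_cast this
    have hpx : x ≤ (p : ℝ) + 1 := by
      have : (M : ℝ) ≤ (p : ℝ) := by exact_mod_cast hp
      linarith
    have hpp : (0 : ℝ) < (p : ℝ) + 1 := by positivity
    have hy : (0 : ℝ) < B * ((p : ℝ) + 1) ^ b := by positivity
    have h1 : g p ≤ ((p : ℝ) + 1) ^ c * (K / (B * ((p : ℝ) + 1) ^ b) ^ k) := by
      simp only [hgdef]
      rw [neg_mul]
      exact mul_le_mul_of_nonneg_left (exp_neg_le_factorial_div k hy) (by positivity)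
    have hyk : (B * ((p : ℝ) + 1) ^ b) ^ k = B ^ k * ((p : ℝ) + 1) ^ (b * (k : ℝ)) := by
      rw [mul_pow]
      congr 1
      rw [← Real.rpow_natCast (((p : ℝ) + 1) ^ b) k, ← Real.rpow_mul hpp.le]
    have e1 : g p ≤ K * (B ^ k)⁻¹ *
        (((p:ℝ)+1) ^ (c + 2 - b * (k:ℝ)) * ((p:ℝ)+1) ^ (-2 : ℝ)) := by
      refine h1.trans (le_of_eq ?_)
      rw [hyk, ← Real.rpow_add hpp,
        show c + 2 - b * (k:ℝ) + -2 = c - b * (k:ℝ) by ring,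
        Real.rpow_sub hpp]
      have hA : ((p:ℝ)+1) ^ (b * (k:ℝ)) ≠ 0 :=
        ne_of_gt (Real.rpow_pos_of_pos hpp _)
      have hBk' : (B:ℝ) ^ k ≠ 0 := by positivity
      field_simp
    have e2 : ((p:ℝ)+1) ^ (c + 2 - b * (k:ℝ)) ≤ x ^ (c + 2 - b * (k:ℝ)) :=
      Real.rpow_le_rpow_of_nonpos hx0 hpx (by linarith)
    have e3 : ((p:ℝ)+1) ^ (-2 : ℝ) ≤ 1 / ((p:ℝ) * ((p:ℝ)+1)) := by
      rw [Real.rpow_neg hpp.le,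
        show (2:ℝ) = ((2:ℕ):ℝ) by norm_num, Real.rpow_natCast, one_div]
      apply inv_anti₀ (by positivity)
      nlinarith
    calc g p ≤ K * (B ^ k)⁻¹ *
          (((p:ℝ)+1) ^ (c + 2 - b * (k:ℝ)) * ((p:ℝ)+1) ^ (-2 : ℝ)) := e1
      _ ≤ K * (B ^ k)⁻¹ * (x ^ (c + 2 - b * (k:ℝ)) * (1 / ((p:ℝ) * ((p:ℝ)+1)))) := by
          refine mul_le_mul_of_nonneg_left ?_ (by positivity)
          exact mul_le_mul e2 e3 (by positivity) (by positivity)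
      _ = K * x ^ (c + 2 - b * (k:ℝ)) * x ^ (b * (k : ℝ)) * (1 / ((p : ℝ) * ((p : ℝ) + 1))) := by
          rw [hBk]
          ring
  -- tail sum bound
  have htail : ∀ Q : ℕ, ∑ p ∈ Finset.Ico M Q, g p ≤ K * x ^ (c + 1) := by
    intro Q
    obtain ⟨hsumtel, htstel⟩ := telescope_tail M hM1
    have hico : ∑ p ∈ Finset.Ico M Q, (1 / ((p : ℝ) * ((p : ℝ) + 1))) ≤ 1 / (M : ℝ) := by
      rw [Finset.sum_Ico_eq_sum_range]
      have := Summable.sum_le_tsum (Finset.range (Q - M))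
        (fun q _ => by positivity : ∀ q ∉ Finset.range (Q - M),
          (0:ℝ) ≤ 1 / (((q : ℝ) + M) * ((q : ℝ) + M + 1))) hsumtel
      refine le_trans (le_of_eq (Finset.sum_congr rfl fun i _ => ?_)) (this.trans htstel)
      push_cast
      ring_nf
    calc ∑ p ∈ Finset.Ico M Q, g p
        ≤ ∑ p ∈ Finset.Ico M Q,
            (K * x ^ (c + 2 - b * (k:ℝ)) * x ^ (b * (k : ℝ)) * (1 / ((p : ℝ) * ((p : ℝ) + 1)))) := by
          refine Finset.sum_le_sum fun p hp => hterm p (Finset.mem_Ico.mp hp).1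
      _ = K * x ^ (c + 2 - b * (k:ℝ)) * x ^ (b * (k : ℝ)) *
            ∑ p ∈ Finset.Ico M Q, (1 / ((p : ℝ) * ((p : ℝ) + 1))) := by
          rw [Finset.mul_sum]
      _ ≤ K * x ^ (c + 2 - b * (k:ℝ)) * x ^ (b * (k : ℝ)) * (1 / (M : ℝ)) := by
          refine mul_le_mul_of_nonneg_left hico (by positivity)
      _ ≤ K * x ^ (c + 2 - b * (k:ℝ)) * x ^ (b * (k : ℝ)) * x⁻¹ := by
          refine mul_le_mul_of_nonneg_left ?_ (by positivity)
          rw [one_div]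
          exact inv_anti₀ hx0 hxM
      _ = K * x ^ (c + 1) := by
          rw [show x⁻¹ = x ^ (-1 : ℝ) by rw [Real.rpow_neg_one],
            mul_assoc, mul_assoc, ← Real.rpow_add hx0, ← Real.rpow_add hx0,
            show c + 2 - b * (k:ℝ) + (b * (k:ℝ) + -1) = c + 1 by ring]
  -- combine into partial sum bound
  have hpart : ∀ Q : ℕ, ∑ p ∈ Finset.range Q, g p ≤ (2 ^ (c + 1) + K) * x ^ (c + 1) := by
    intro Q
    have hsub : ∑ p ∈ Finset.range Q, g p ≤ ∑ p ∈ Finset.range (max Q M), g p :=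
      Finset.sum_le_sum_of_subset_of_nonneg
        (Finset.range_subset_range.mpr (le_max_left _ _)) (fun i _ _ => hgnn i)
    have hsplit : ∑ p ∈ Finset.range (max Q M), g p
        = ∑ p ∈ Finset.range M, g p + ∑ p ∈ Finset.Ico M (max Q M), g p := by
      rw [Finset.range_eq_Ico,
        ← Finset.sum_Ico_consecutive _ (Nat.zero_le M) (le_max_right Q M),
        ← Finset.range_eq_Ico]
    have h1 := hhead
    have h2 := htail (max Q M)
    have : (2 ^ (c + 1) + K) * x ^ (c + 1)
        = 2 ^ (c + 1) * x ^ (c + 1) + K * x ^ (c + 1) := by ring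
    rw [this]
    linarith [hsub, hsplit.le, hsplit.ge]
  have hxB : x ^ (c + 1) = B ^ (-(c + 1) / b) := hxpow (c + 1)
  refine ⟨summable_of_sum_range_le hgnn hpart, ?_⟩
  rw [← hxB]
  exact Real.tsum_le_of_sum_range_le hgnn hpart

lemma pi_prod_summable_tsum {D : ℕ} (F : Fin D → ℕ → ℝ)
    (hs : ∀ l, Summable (F l)) (hnn : ∀ l q, 0 ≤ F l q) :
    Summable (fun p : Fin D → ℕ => ∏ l, F l (p l)) ∧
      ∑' p : Fin D → ℕ, ∏ l, F l (p l) = ∏ l, ∑' q, F l q := by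
  induction D with
  | zero =>
      refine ⟨Summable.of_finite, ?_⟩
      simp
  | succ D ih =>
      obtain ⟨ihs, iht⟩ := ih (fun l => F l.succ) (fun l => hs _) (fun l q => hnn _ _)
      set G : ℕ × (Fin D → ℕ) → ℝ :=
        fun x => F 0 x.1 * ∏ l : Fin D, F l.succ (x.2 l) with hGdef
      have hG : Summable G := by
        apply Summable.mul_of_nonneg (hs 0) ihs
        · exact fun q => hnn 0 q
        · exact fun r => Finset.prod_nonneg fun l _ => hnn _ _
      let e : ℕ × (Fin D → ℕ) ≃ (Fin (D+1) → ℕ) := Fin.consEquiv (fun _ => ℕ)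
      have hcomp : (fun p : Fin (D+1) → ℕ => ∏ l, F l (p l)) ∘ e = G := by
        funext x
        simp only [Function.comp, hGdef]
        rw [Fin.prod_univ_succ]
        simp [e, Fin.consEquiv]
      constructor
      · exact (Equiv.summable_iff e).mp (hcomp ▸ hG)
      · rw [← Equiv.tsum_eq e (fun p : Fin (D+1) → ℕ => ∏ l, F l (p l))]
        have : ∀ x : ℕ × (Fin D → ℕ), (∏ l, F l ((e x) l)) = G x := fun x => congrFun hcomp x
        rw [tsum_congr this, hGdef]
        have := Summable.tsum_mul_tsum (hs 0) ihs hG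
        rw [← this, iht, Fin.prod_univ_succ]

lemma pow_sum_le_aux {D : ℕ} (hD : 1 ≤ D) (A : Fin D → ℝ) (hA : ∀ l, 0 ≤ A l) (n : ℕ) :
    (∑ l, A l) ^ n ≤ (D : ℝ) ^ n * ∑ l, A l ^ n := by
  have hD' : (0 : ℝ) < (D : ℝ) := by exact_mod_cast hD
  have hD1 : (1 : ℝ) ≤ (D : ℝ) := by exact_mod_cast hD
  cases n with
  | zero =>
      simp only [pow_zero, one_mul, Finset.sum_const, Finset.card_univ,
        Fintype.card_fin, nsmul_eq_mul, mul_one]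
      exact hD1
  | succ m =>
      have h := pow_sum_div_card_le_sum_pow (s := (Finset.univ : Finset (Fin D)))
        (f := A) (fun i _ => hA i) m
      rw [Finset.card_univ, Fintype.card_fin] at h
      rw [div_le_iff₀ (pow_pos hD' m)] at h
      have hs : (0 : ℝ) ≤ ∑ l, A l ^ (m + 1) :=
        Finset.sum_nonneg fun i _ => pow_nonneg (hA i) _
      have hmono : ((D : ℝ)) ^ m ≤ (D : ℝ) ^ (m + 1) :=
        pow_le_pow_right₀ hD1 (Nat.le_succ m)
      calc (∑ l, A l) ^ (m + 1) ≤ (∑ l, A l ^ (m + 1)) * (D : ℝ) ^ m := h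
        _ ≤ (∑ l, A l ^ (m + 1)) * (D : ℝ) ^ (m + 1) :=
            mul_le_mul_of_nonneg_left hmono hs
        _ = (D : ℝ) ^ (m + 1) * ∑ l, A l ^ (m + 1) := mul_comm _ _

/-- Multi-dimensional spectral sum: for a ≥ 0, b > 0, D ≥ 1 and n : ℕ,
`S(B) = ∑_{p₁,...,p_D ≥ 1} (∑_l p_l^a)^n e^{-B ∑_l p_l^b}`
behaves like `B^{-(a n + D)/b}` as B → 0⁺. -/
theorem spectral_sum_multi (a b : ℝ) (ha : 0 ≤ a) (hb : 0 < b) (D : ℕ) (hD : 1 ≤ D)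
    (n : ℕ) :
    ∃ c₁ c₂ : ℝ, 0 < c₁ ∧ 0 < c₂ ∧ ∃ B₀ : ℝ, 0 < B₀ ∧
      ∀ B : ℝ, 0 < B → B < B₀ →
        c₁ * B ^ (-(a * n + D) / b) ≤
          (∑' p : Fin D → ℕ,
            (∑ l : Fin D, ((p l : ℝ) + 1) ^ a) ^ n *
              Real.exp (-B * ∑ l : Fin D, ((p l : ℝ) + 1) ^ b)) ∧
        (∑' p : Fin D → ℕ,
            (∑ l : Fin D, ((p l : ℝ) + 1) ^ a) ^ n *
              Real.exp (-B * ∑ l : Fin D, ((p l : ℝ) + 1) ^ b)) ≤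
          c₂ * B ^ (-(a * n + D) / b) := by
  have han : 0 ≤ a * (n : ℝ) := mul_nonneg ha (Nat.cast_nonneg n)
  obtain ⟨C₁, hC₁, hT⟩ := one_dim_bound (a * n) b han hb
  obtain ⟨C₀, hC₀, hU⟩ := one_dim_bound 0 b le_rfl hb
  have hD' : (0 : ℝ) < (D : ℝ) := by exact_mod_cast hD
  have hD1 : (1 : ℝ) ≤ (D : ℝ) := by exact_mod_cast hD
  have hDcast : ((D - 1 : ℕ) : ℝ) = (D : ℝ) - 1 := by
    push_cast [Nat.cast_sub hD]
    ring
  set c₁ : ℝ := Real.exp (-(D : ℝ)) / ((4 : ℝ) ^ (a * (n : ℝ) + 1) * 2 ^ (D - 1))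
    with hc₁def
  set c₂ : ℝ := (D : ℝ) ^ n * (D : ℝ) * C₁ * C₀ ^ (D - 1) with hc₂def
  have hc₁pos : 0 < c₁ := by rw [hc₁def]; positivity
  have hc₂pos : 0 < c₂ := by
    rw [hc₂def]
    exact mul_pos (mul_pos (mul_pos (pow_pos hD' n) hD') hC₁) (pow_pos hC₀ _)
  refine ⟨c₁, c₂, hc₁pos, hc₂pos, 2 ^ (-b), Real.rpow_pos_of_pos two_pos _, ?_⟩
  intro B hB hB0
  have hB1 : B < 1 :=
    lt_of_lt_of_le hB0 (Real.rpow_le_one_of_one_le_of_nonpos one_le_two (by linarith))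
  set x : ℝ := B ^ (-1 / b) with hxdef
  have hx0 : 0 < x := Real.rpow_pos_of_pos hB _
  have hxpow : ∀ t : ℝ, x ^ t = B ^ (-t / b) := by
    intro t
    rw [hxdef, ← Real.rpow_mul hB.le]
    congr 1
    field_simp
  have hx2 : 2 < x := by
    have h1 : ((2 : ℝ) ^ (-b)) ^ (-1 / b) < B ^ (-1 / b) :=
      Real.rpow_lt_rpow_of_neg hB hB0 (div_neg_of_neg_of_pos (by norm_num) hb)
    have h2 : ((2 : ℝ) ^ (-b)) ^ (-1 / b) = 2 := by
      rw [← Real.rpow_mul (by norm_num : (0 : ℝ) ≤ 2),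
        show (-b) * (-1 / b) = 1 by field_simp]
      exact Real.rpow_one 2
    rw [hxdef]
    linarith [h1, h2.le, h2.ge]
  have hx1 : 1 < x := by linarith
  have hxb : x ^ b = B⁻¹ := by
    rw [hxpow b, show -b / b = -1 by field_simp, Real.rpow_neg_one]
  set f : (Fin D → ℕ) → ℝ := fun p =>
    (∑ l : Fin D, ((p l : ℝ) + 1) ^ a) ^ n *
      Real.exp (-B * ∑ l : Fin D, ((p l : ℝ) + 1) ^ b) with hfdef
  have hfnn : ∀ p, 0 ≤ f p := by
    intro p
    simp only [hfdef]
    have h1 : 0 ≤ ∑ l : Fin D, ((p l : ℝ) + 1) ^ a :=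
      Finset.sum_nonneg fun l _ => by positivity
    positivity
  -- one-dimensional summand families
  set F : Fin D → Fin D → ℕ → ℝ := fun l₀ l q =>
    ((q : ℝ) + 1) ^ (if l = l₀ then a * (n : ℝ) else 0) *
      Real.exp (-B * ((q : ℝ) + 1) ^ b) with hFdef
  have hFs : ∀ l₀ l, Summable (F l₀ l) := by
    intro l₀ l
    by_cases h : l = l₀
    · simp only [hFdef, h, if_true]
      exact (hT B hB hB1).1
    · simp only [hFdef, if_neg h]
      exact (hU B hB hB1).1
  have hFnn : ∀ l₀ l q, 0 ≤ F l₀ l q := by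
    intro l₀ l q
    simp only [hFdef]
    positivity
  have hH : ∀ l₀ : Fin D, Summable (fun p : Fin D → ℕ => ∏ l, F l₀ l (p l)) ∧
      ∑' p : Fin D → ℕ, ∏ l, F l₀ l (p l) = ∏ l, ∑' q, F l₀ l q :=
    fun l₀ => pi_prod_summable_tsum (F l₀) (hFs l₀) (hFnn l₀)
  -- pointwise majorant
  have hexpfact : ∀ p : Fin D → ℕ,
      Real.exp (-B * ∑ l : Fin D, ((p l : ℝ) + 1) ^ b)
        = ∏ l : Fin D, Real.exp (-B * ((p l : ℝ) + 1) ^ b) := by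
    intro p
    rw [← Real.exp_sum]
    congr 1
    rw [Finset.mul_sum]
  have hprodF : ∀ (l₀ : Fin D) (p : Fin D → ℕ),
      (∏ l, F l₀ l (p l)) =
        ((p l₀ : ℝ) + 1) ^ (a * (n : ℝ)) *
          ∏ l : Fin D, Real.exp (-B * ((p l : ℝ) + 1) ^ b) := by
    intro l₀ p
    simp only [hFdef]
    rw [Finset.prod_mul_distrib]
    congr 1
    have : ∀ l : Fin D, ((p l : ℝ) + 1) ^ (if l = l₀ then a * (n : ℝ) else 0)
        = if l = l₀ then ((p l : ℝ) + 1) ^ (a * (n : ℝ)) else 1 := by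
      intro l
      split_ifs with h
      · rfl
      · exact Real.rpow_zero _
    rw [Finset.prod_congr rfl fun l _ => this l]
    rw [Finset.prod_ite_eq' Finset.univ l₀ fun l => ((p l : ℝ) + 1) ^ (a * (n : ℝ))]
    simp
  have hpoint : ∀ p : Fin D → ℕ,
      f p ≤ (D : ℝ) ^ n * ∑ l₀ : Fin D, ∏ l, F l₀ l (p l) := by
    intro p
    have hA : ∀ l : Fin D, (0 : ℝ) ≤ ((p l : ℝ) + 1) ^ a := fun l => by positivity
    have h1 := pow_sum_le_aux hD (fun l => ((p l : ℝ) + 1) ^ a) hA n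
    have h2 : ∀ l₀ : Fin D, (((p l₀ : ℝ) + 1) ^ a) ^ n = ((p l₀ : ℝ) + 1) ^ (a * (n : ℝ)) := by
      intro l₀
      rw [← Real.rpow_natCast (((p l₀ : ℝ) + 1) ^ a) n, ← Real.rpow_mul (by positivity)]
    calc f p = (∑ l : Fin D, ((p l : ℝ) + 1) ^ a) ^ n *
          ∏ l : Fin D, Real.exp (-B * ((p l : ℝ) + 1) ^ b) := by
          simp only [hfdef]; rw [hexpfact p]
      _ ≤ ((D : ℝ) ^ n * ∑ l₀ : Fin D, (((p l₀ : ℝ) + 1) ^ a) ^ n) *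
          ∏ l : Fin D, Real.exp (-B * ((p l : ℝ) + 1) ^ b) := by
          exact mul_le_mul_of_nonneg_right h1
            (Finset.prod_nonneg fun l _ => (Real.exp_pos _).le)
      _ = (D : ℝ) ^ n * ∑ l₀ : Fin D, ∏ l, F l₀ l (p l) := by
          rw [mul_assoc, Finset.sum_mul]
          congr 1
          refine Finset.sum_congr rfl fun l₀ _ => ?_
          rw [hprodF l₀ p, h2 l₀]
  have hmajsum : Summable (fun p : Fin D → ℕ =>
      (D : ℝ) ^ n * ∑ l₀ : Fin D, ∏ l, F l₀ l (p l)) := by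
    apply Summable.mul_left
    exact summable_sum fun l₀ _ => (hH l₀).1
  have hfs : Summable f := Summable.of_nonneg_of_le hfnn hpoint hmajsum
  -- upper bound
  have hupper : ∑' p, f p ≤ c₂ * B ^ (-(a * (n : ℝ) + (D : ℝ)) / b) := by
    have step1 : ∑' p, f p ≤ (D : ℝ) ^ n * ∑ l₀ : Fin D, ∑' p : Fin D → ℕ, ∏ l, F l₀ l (p l) := by
      calc ∑' p, f p ≤ ∑' p : Fin D → ℕ, ((D : ℝ) ^ n * ∑ l₀ : Fin D, ∏ l, F l₀ l (p l)) :=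
            Summable.tsum_le_tsum hpoint hfs hmajsum
        _ = (D : ℝ) ^ n * ∑' p : Fin D → ℕ, ∑ l₀ : Fin D, ∏ l, F l₀ l (p l) :=
            tsum_mul_left
        _ = (D : ℝ) ^ n * ∑ l₀ : Fin D, ∑' p : Fin D → ℕ, ∏ l, F l₀ l (p l) := by
            rw [Summable.tsum_finsetSum fun l₀ _ => (hH l₀).1]
    have hTbound := (hT B hB hB1).2
    have hUbound := (hU B hB hB1).2
    have step2 : ∀ l₀ : Fin D, ∑' p : Fin D → ℕ, ∏ l, F l₀ l (p l)
        ≤ (C₁ * B ^ (-(a * (n : ℝ) + 1) / b)) * (C₀ * B ^ (-(0 + 1) / b)) ^ (D - 1) := by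
      intro l₀
      rw [(hH l₀).2]
      have hbnd : ∀ l : Fin D, ∑' q, F l₀ l q ≤
          (if l = l₀ then C₁ * B ^ (-(a * (n : ℝ) + 1) / b) else C₀ * B ^ (-(0 + 1) / b)) := by
        intro l
        by_cases h : l = l₀
        · simp only [h, if_true]
          simp only [hFdef, if_true]
          exact hTbound
        · simp only [if_neg h]
          simp only [hFdef, if_neg h]
          exact hUbound
      calc ∏ l, ∑' q, F l₀ l q
          ≤ ∏ l : Fin D, (if l = l₀ then C₁ * B ^ (-(a * (n : ℝ) + 1) / b)
              else C₀ * B ^ (-(0 + 1) / b)) := by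
            refine Finset.prod_le_prod (fun l _ => tsum_nonneg fun q => hFnn l₀ l q)
              (fun l _ => hbnd l)
        _ = (C₁ * B ^ (-(a * (n : ℝ) + 1) / b)) * (C₀ * B ^ (-(0 + 1) / b)) ^ (D - 1) := by
            rw [← Finset.mul_prod_erase Finset.univ _ (Finset.mem_univ l₀)]
            simp only [if_true]
            congr 1
            rw [Finset.prod_congr rfl (fun l hl => if_neg (Finset.ne_of_mem_erase hl))]
            rw [Finset.prod_const, Finset.card_erase_of_mem (Finset.mem_univ l₀),
              Finset.card_univ, Fintype.card_fin]
    calc ∑' p, f p ≤ (D : ℝ) ^ n * ∑ l₀ : Fin D, ∑' p : Fin D → ℕ, ∏ l, F l₀ l (p l) := step1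
      _ ≤ (D : ℝ) ^ n * ∑ l₀ : Fin D,
            ((C₁ * B ^ (-(a * (n : ℝ) + 1) / b)) * (C₀ * B ^ (-(0 + 1) / b)) ^ (D - 1)) := by
          refine mul_le_mul_of_nonneg_left (Finset.sum_le_sum fun l₀ _ => step2 l₀)
            (by positivity)
      _ = (D : ℝ) ^ n * ((D : ℝ) *
            ((C₁ * B ^ (-(a * (n : ℝ) + 1) / b)) * (C₀ * B ^ (-(0 + 1) / b)) ^ (D - 1))) := by
          rw [Finset.sum_const, Finset.card_univ, Fintype.card_fin, nsmul_eq_mul]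
      _ = c₂ * B ^ (-(a * (n : ℝ) + (D : ℝ)) / b) := by
          rw [hc₂def, mul_pow C₀ _ (D - 1),
            show (-(0 + 1) / b : ℝ) = -1 / b by norm_num,
            ← Real.rpow_natCast (B ^ (-1 / b)) (D - 1), ← Real.rpow_mul hB.le]
          have hBe : B ^ (-(a * (n : ℝ) + 1) / b) * B ^ (-1 / b * ((D - 1 : ℕ) : ℝ))
              = B ^ (-(a * (n : ℝ) + (D : ℝ)) / b) := by
            rw [← Real.rpow_add hB]
            congr 1
            rw [hDcast]
            field_simp
            ring
          rw [← hBe]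
          ring
  -- lower bound
  set N : ℕ := ⌊x⌋₊ with hNdef
  have hNx : (N : ℝ) ≤ x := Nat.floor_le hx0.le
  have hNlow : x - 1 < (N : ℝ) := Nat.sub_one_lt_floor x
  have hxN : x / 2 ≤ (N : ℝ) := by linarith
  set l₀ : Fin D := ⟨0, hD⟩ with hl₀def
  set G : Fin D → ℕ → ℝ := fun l q =>
    if l = l₀ then ((q : ℝ) + 1) ^ (a * (n : ℝ)) * Real.exp (-(D : ℝ)) else 1 with hGdef
  set P : Finset (Fin D → ℕ) := Fintype.piFinset (fun _ : Fin D => Finset.range N)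
    with hPdef
  have hpointlow : ∀ p ∈ P, (∏ l, G l (p l)) ≤ f p := by
    intro p hp
    have hmem : ∀ l, p l < N := by
      intro l
      exact Finset.mem_range.mp (Fintype.mem_piFinset.mp hp l)
    have hyb : ∀ l : Fin D, ((p l : ℝ) + 1) ^ b ≤ B⁻¹ := by
      intro l
      rw [← hxb]
      apply Real.rpow_le_rpow (by positivity) _ hb.le
      have h1 : (p l : ℝ) + 1 ≤ (N : ℝ) := by exact_mod_cast hmem l
      linarith
    have hsumb : ∑ l : Fin D, ((p l : ℝ) + 1) ^ b ≤ (D : ℝ) * B⁻¹ := by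
      calc ∑ l : Fin D, ((p l : ℝ) + 1) ^ b ≤ ∑ _l : Fin D, B⁻¹ :=
            Finset.sum_le_sum fun l _ => hyb l
        _ = (D : ℝ) * B⁻¹ := by
            rw [Finset.sum_const, Finset.card_univ, Fintype.card_fin, nsmul_eq_mul]
    have hexp : Real.exp (-(D : ℝ)) ≤ Real.exp (-B * ∑ l : Fin D, ((p l : ℝ) + 1) ^ b) := by
      rw [Real.exp_le_exp]
      have h1 : B * ∑ l : Fin D, ((p l : ℝ) + 1) ^ b ≤ B * ((D : ℝ) * B⁻¹) :=
        mul_le_mul_of_nonneg_left hsumb hB.le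
      have h2 : B * ((D : ℝ) * B⁻¹) = (D : ℝ) := by field_simp
      nlinarith [h1, h2]
    have hpow : ((p l₀ : ℝ) + 1) ^ (a * (n : ℝ)) ≤ (∑ l : Fin D, ((p l : ℝ) + 1) ^ a) ^ n := by
      have h1 : ((p l₀ : ℝ) + 1) ^ a ≤ ∑ l : Fin D, ((p l : ℝ) + 1) ^ a :=
        Finset.single_le_sum (f := fun l => ((p l : ℝ) + 1) ^ a)
          (fun l _ => by positivity) (Finset.mem_univ l₀)
      have h2 : (((p l₀ : ℝ) + 1) ^ a) ^ n ≤ (∑ l : Fin D, ((p l : ℝ) + 1) ^ a) ^ n :=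
        pow_le_pow_left₀ (by positivity) h1 n
      calc ((p l₀ : ℝ) + 1) ^ (a * (n : ℝ)) = (((p l₀ : ℝ) + 1) ^ a) ^ n := by
            rw [← Real.rpow_natCast (((p l₀ : ℝ) + 1) ^ a) n,
              ← Real.rpow_mul (by positivity)]
        _ ≤ _ := h2
    have hGp : (∏ l, G l (p l)) = ((p l₀ : ℝ) + 1) ^ (a * (n : ℝ)) * Real.exp (-(D : ℝ)) := by
      simp only [hGdef]
      rw [Finset.prod_ite_eq' Finset.univ l₀
        (fun l => ((p l : ℝ) + 1) ^ (a * (n : ℝ)) * Real.exp (-(D : ℝ)))]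
      simp
    rw [hGp]
    simp only [hfdef]
    have hsnn : (0 : ℝ) ≤ (∑ l : Fin D, ((p l : ℝ) + 1) ^ a) ^ n :=
      pow_nonneg (Finset.sum_nonneg fun l _ => by positivity) n
    exact mul_le_mul hpow hexp (Real.exp_pos _).le hsnn
  have hsumP : ∑ p ∈ P, ∏ l, G l (p l) = ∏ l : Fin D, ∑ q ∈ Finset.range N, G l q := by
    rw [hPdef, ← Finset.prod_univ_sum]
  have hGsum : ∀ l : Fin D, ∑ q ∈ Finset.range N, G l q
      = if l = l₀ then
          ∑ q ∈ Finset.range N, ((q : ℝ) + 1) ^ (a * (n : ℝ)) * Real.exp (-(D : ℝ))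
        else (N : ℝ) := by
    intro l
    simp only [hGdef]
    split_ifs with h
    · rfl
    · rw [Finset.sum_const, Finset.card_range, nsmul_eq_mul, mul_one]
  have hprodG : ∏ l : Fin D, ∑ q ∈ Finset.range N, G l q
      = (∑ q ∈ Finset.range N, ((q : ℝ) + 1) ^ (a * (n : ℝ)) * Real.exp (-(D : ℝ)))
          * (N : ℝ) ^ (D - 1) := by
    rw [Finset.prod_congr rfl fun l _ => hGsum l,
      ← Finset.mul_prod_erase Finset.univ _ (Finset.mem_univ l₀)]
    simp only [if_true]
    congr 1
    rw [Finset.prod_congr rfl fun l hl => if_neg (Finset.ne_of_mem_erase hl),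
      Finset.prod_const, Finset.card_erase_of_mem (Finset.mem_univ l₀),
      Finset.card_univ, Fintype.card_fin]
  have hS : (x / 4) * ((x / 4) ^ (a * (n : ℝ)) * Real.exp (-(D : ℝ)))
      ≤ ∑ q ∈ Finset.range N, ((q : ℝ) + 1) ^ (a * (n : ℝ)) * Real.exp (-(D : ℝ)) := by
    have hsub : Finset.Ico (N / 2) N ⊆ Finset.range N := by
      rw [Finset.range_eq_Ico]
      exact Finset.Ico_subset_Ico (Nat.zero_le _) le_rfl
    have hterm : ∀ q ∈ Finset.Ico (N / 2) N,
        (x / 4) ^ (a * (n : ℝ)) * Real.exp (-(D : ℝ))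
          ≤ ((q : ℝ) + 1) ^ (a * (n : ℝ)) * Real.exp (-(D : ℝ)) := by
      intro q hq
      have hq2 : N / 2 ≤ q := (Finset.mem_Ico.mp hq).1
      have hcast : ((N / 2 : ℕ) : ℝ) ≤ (q : ℝ) := by exact_mod_cast hq2
      have hN2 : (N : ℝ) ≤ 2 * ((N / 2 : ℕ) : ℝ) + 1 := by
        have h0 : N ≤ 2 * (N / 2) + 1 := by omega
        exact_mod_cast h0
      have hq4 : x / 4 ≤ (q : ℝ) + 1 := by linarith
      exact mul_le_mul_of_nonneg_right
        (Real.rpow_le_rpow (by positivity) hq4 han) (Real.exp_pos _).le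
    have hcard : (x / 4) ≤ ((Finset.Ico (N / 2) N).card : ℝ) := by
      rw [Nat.card_Ico]
      have hle : N / 2 ≤ N := Nat.div_le_self N 2
      have h1 : ((N - N / 2 : ℕ) : ℝ) = (N : ℝ) - ((N / 2 : ℕ) : ℝ) := by
        exact Nat.cast_sub hle
      have h2 : ((N / 2 : ℕ) : ℝ) ≤ (N : ℝ) / 2 := Nat.cast_div_le
      rw [h1]
      linarith
    calc (x / 4) * ((x / 4) ^ (a * (n : ℝ)) * Real.exp (-(D : ℝ)))
        ≤ ((Finset.Ico (N / 2) N).card : ℝ)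
            * ((x / 4) ^ (a * (n : ℝ)) * Real.exp (-(D : ℝ))) :=
          mul_le_mul_of_nonneg_right hcard (by positivity)
      _ = ∑ _q ∈ Finset.Ico (N / 2) N, (x / 4) ^ (a * (n : ℝ)) * Real.exp (-(D : ℝ)) := by
          rw [Finset.sum_const, nsmul_eq_mul]
      _ ≤ ∑ q ∈ Finset.Ico (N / 2) N, ((q : ℝ) + 1) ^ (a * (n : ℝ)) * Real.exp (-(D : ℝ)) :=
          Finset.sum_le_sum hterm
      _ ≤ ∑ q ∈ Finset.range N, ((q : ℝ) + 1) ^ (a * (n : ℝ)) * Real.exp (-(D : ℝ)) :=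
          Finset.sum_le_sum_of_subset_of_nonneg hsub (fun q _ _ => by positivity)
  have hNpow : (x / 2) ^ (D - 1) ≤ (N : ℝ) ^ (D - 1) :=
    pow_le_pow_left₀ (by positivity) hxN _
  have h3 : (x / 4) * ((x / 4) ^ (a * (n : ℝ)) * Real.exp (-(D : ℝ))) * (x / 2) ^ (D - 1)
      ≤ ∑ p ∈ P, ∏ l, G l (p l) := by
    rw [hsumP, hprodG]
    have hsumnn : (0 : ℝ) ≤
        ∑ q ∈ Finset.range N, ((q : ℝ) + 1) ^ (a * (n : ℝ)) * Real.exp (-(D : ℝ)) :=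
      Finset.sum_nonneg fun q _ => by positivity
    exact mul_le_mul hS hNpow (by positivity) hsumnn
  have e1 : x ^ (a * (n : ℝ) + 1) * x ^ ((D - 1 : ℕ) : ℝ)
      = B ^ (-(a * (n : ℝ) + (D : ℝ)) / b) := by
    rw [← Real.rpow_add hx0, hxpow]
    congr 1
    rw [hDcast]
    ring
  have h4 : c₁ * B ^ (-(a * (n : ℝ) + (D : ℝ)) / b)
      = (x / 4) * ((x / 4) ^ (a * (n : ℝ)) * Real.exp (-(D : ℝ))) * (x / 2) ^ (D - 1) := by
    have h4a : (4 : ℝ) ^ (a * (n : ℝ) + 1) ≠ 0 :=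
      ne_of_gt (Real.rpow_pos_of_pos (by norm_num) _)
    have h4b : ((2 : ℝ)) ^ (D - 1) ≠ 0 := by positivity
    rw [hc₁def, ← e1,
      show (x / 4) * ((x / 4) ^ (a * (n : ℝ)) * Real.exp (-(D : ℝ)))
        = (x / 4) ^ (a * (n : ℝ) + 1) * Real.exp (-(D : ℝ)) by
          rw [Real.rpow_add (by positivity), Real.rpow_one]; ring,
      Real.div_rpow hx0.le (by norm_num : (0 : ℝ) ≤ 4), div_pow,
      ← Real.rpow_natCast x (D - 1)]
    field_simp
  have h1 : ∑ p ∈ P, f p ≤ ∑' p, f p := Summable.sum_le_tsum P (fun p _ => hfnn p) hfs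
  have h2 : ∑ p ∈ P, ∏ l, G l (p l) ≤ ∑ p ∈ P, f p := Finset.sum_le_sum hpointlow
  constructor
  · rw [h4]
    linarith
  · exact hupper
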